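/- Let μ be the sparse measure on 2^ℕ (marginals m_{n_k}({1}) = 2^k/(2^k+1) along the sparse index sequence n_0 = 0, n_{k+1} = n_k + 2^{k·(Σ_{i≤k} i)}, and m_n({1}) = 1/2 otherwise). For x ∈ 2^ℕ with infinitely many 1s, let n_0(x) < n_1(x) < ⋯ enumerate {n : x(n) = 1}, let r(n) = 2^{−k} if n = n_k and r(n) = 1 otherwise, and set C_k(x) = ∏_{i=0}^{k−1} r(n_i(x)). Then for μ-almost every x ∈ 2^ℕ, x has infinitely many 1s and lim_{k→∞} C_k(x) = 0; that is, the Radon–Nikodym cocycle vanishes along the forward geodesic of the least-deletion map. -/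

import Mathlib

open MeasureTheory Filter Set ENNReal

/-- `μ` is the product of the marginal measures `m n` on `Bool`. -/
def IsProductMeasure (μ : Measure (ℕ → Bool)) (m : ℕ → Measure Bool) : Prop :=
  ∀ (s : Finset ℕ) (a : ℕ → Bool),
    μ {x | ∀ n ∈ s, x n = a n} = ∏ n ∈ s, m n {a n}

/-- The sparse index sequence: `n₀ = 0` and `n_{k+1} = n_k + 2 ^ (k · Σ_{i ≤ k} i)`. -/
def sparseSeq : ℕ → ℕ
  | 0 => 0
  | k + 1 => sparseSeq k + 2 ^ (k * ∑ i ∈ Finset.range (k + 1), i)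

/-- `p_k = 2 ^ (Σ_{i ≤ k} i)`. -/
def sparseP (k : ℕ) : ℕ := 2 ^ (∑ i ∈ Finset.range (k + 1), i)

/-- The marginals of the sparse measure: `m (n_k) {1} = 2^k/(2^k+1)` along the sparse index
sequence, and `m n {1} = 1/2` for `n` not of the form `n_k`. -/
def IsSparseMarginals (m : ℕ → Measure Bool) : Prop :=
  (∀ k : ℕ, m (sparseSeq k) {true} = (2 ^ k : ℝ≥0∞) / (2 ^ k + 1)) ∧
    ∀ n : ℕ, (∀ k : ℕ, n ≠ sparseSeq k) → m n {true} = 1 / 2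

/-- The multiplicative jump `m n {0} / m n {1}` of the sparse measure: `r (n_k) = 2⁻ᵏ` along the
sparse index sequence and `r n = 1` otherwise. -/
def IsSparseJump (r : ℕ → ℝ≥0∞) : Prop :=
  (∀ k : ℕ, r (sparseSeq k) = ((2 : ℝ≥0∞) ^ k)⁻¹) ∧
    ∀ n : ℕ, (∀ k : ℕ, n ≠ sparseSeq k) → r n = 1

/-- The number of indices `i` with `n_k < i < n_{k+1}` and `x i = 1`. -/
def onesBetween (x : ℕ → Bool) (k : ℕ) : ℕ :=
  ((Finset.Ioo (sparseSeq k) (sparseSeq (k + 1))).filter fun i => x i = true).card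

lemma sparseSeq_strictMono : StrictMono sparseSeq := by
  apply strictMono_nat_of_lt_succ
  intro k
  have h : 0 < 2 ^ (k * ∑ i ∈ Finset.range (k + 1), i) := Nat.pow_pos (by norm_num)
  show sparseSeq k < sparseSeq k + 2 ^ (k * ∑ i ∈ Finset.range (k + 1), i)
  omega

lemma sparse_r_le_one (r : ℕ → ℝ≥0∞) (hr : IsSparseJump r) (n : ℕ) : r n ≤ 1 := by
  by_cases h : ∃ k, n = sparseSeq k
  · obtain ⟨k, rfl⟩ := h
    rw [hr.1 k]
    exact ENNReal.inv_le_one.mpr (one_le_pow_of_one_le' one_le_two k)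
  · push_neg at h
    rw [hr.2 n h]

/-- for the sparse product measure, almost every `x` has infinitely many `1`s and
its cocycle sequence `C k x = ∏_{i<k} r (nᵢ x)` along the forward geodesic of the least-deletion
map tends to `0`.  Here `n₀ x < n₁ x < ⋯` (given by `Nat.nth`) enumerates `{n | x n = 1}`. -/
theorem sparse_cocycle_tendsto_zero
    (m : ℕ → Measure Bool) (hprob : ∀ n, IsProbabilityMeasure (m n))
    (hm : IsSparseMarginals m)
    (r : ℕ → ℝ≥0∞) (hr : IsSparseJump r)
    (μ : Measure (ℕ → Bool)) (hμ : IsProductMeasure μ m) :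
    ∀ᵐ x ∂μ, {n : ℕ | x n = true}.Infinite ∧
      Tendsto (fun k => ∏ i ∈ Finset.range k, r (Nat.nth (fun n => x n = true) i)) atTop
        (nhds 0) := by
  classical
  set E : ℕ → Set (ℕ → Bool) := fun k => {x | x (sparseSeq k) = false} with hE
  -- measure of E k
  have hEk : ∀ k, μ (E k) ≤ (2 : ℝ≥0∞)⁻¹ ^ k := by
    intro k
    have h1 := hμ {sparseSeq k} (fun _ => false)
    simp only [Finset.mem_singleton, Finset.prod_singleton] at h1
    have h2 : {x : ℕ → Bool | ∀ n, n = sparseSeq k → x n = false} = E k := by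
      ext x
      constructor
      · intro h; exact h _ rfl
      · intro h n hn; subst hn; exact h
    rw [h2] at h1
    -- compute m (sparseSeq k) {false}
    have hfin : (2 : ℝ≥0∞) ^ k + 1 ≠ ∞ := by
      refine ENNReal.add_ne_top.mpr ⟨?_, one_ne_top⟩
      exact pow_ne_top ENNReal.ofNat_ne_top
    have hne0 : (2 : ℝ≥0∞) ^ k + 1 ≠ 0 := by simp
    have hcompl : ({true} : Set Bool)ᶜ = {false} := by
      ext b; cases b <;> simp
    haveI := hprob (sparseSeq k)
    have h3 : m (sparseSeq k) {false} = 1 - (2 : ℝ≥0∞) ^ k / (2 ^ k + 1) := by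
      rw [← hcompl, measure_compl (measurableSet_singleton _) (measure_ne_top _ _),
        measure_univ, hm.1 k]
    have h4 : m (sparseSeq k) {false} ≤ ((2 : ℝ≥0∞) ^ k)⁻¹ := by
      rw [h3]
      rw [tsub_le_iff_right]
      calc (1 : ℝ≥0∞) = ((2 : ℝ≥0∞) ^ k + 1) / (2 ^ k + 1) := (ENNReal.div_self hne0 hfin).symm
        _ = (2 : ℝ≥0∞) ^ k / (2 ^ k + 1) + 1 / (2 ^ k + 1) := (ENNReal.div_add_div_same).symm
        _ ≤ (2 : ℝ≥0∞) ^ k / (2 ^ k + 1) + ((2 : ℝ≥0∞) ^ k)⁻¹ := by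
            gcongr
            rw [one_div]
            exact ENNReal.inv_le_inv' le_self_add
        _ = ((2 : ℝ≥0∞) ^ k)⁻¹ + (2 : ℝ≥0∞) ^ k / (2 ^ k + 1) := by ring
    calc μ (E k) = m (sparseSeq k) {false} := h1
      _ ≤ ((2 : ℝ≥0∞) ^ k)⁻¹ := h4
      _ = (2 : ℝ≥0∞)⁻¹ ^ k := ENNReal.inv_pow
  -- Borel–Cantelli
  have hsum : (∑' k, μ (E k)) ≠ ∞ := by
    refine ne_top_of_le_ne_top ?_ (ENNReal.tsum_le_tsum hEk)
    rw [ENNReal.tsum_geometric, ENNReal.one_sub_inv_two]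
    simp
  have hae := MeasureTheory.ae_eventually_notMem hsum
  filter_upwards [hae] with x hx
  obtain ⟨K, hK⟩ := eventually_atTop.mp hx
  have hK' : ∀ k ≥ K, x (sparseSeq k) = true := by
    intro k hk
    have h := hK k hk
    simp only [hE, Set.mem_setOf_eq, Bool.not_eq_false] at h
    exact h
  -- infinitude
  have hinf : {n : ℕ | x n = true}.Infinite := by
    apply Set.infinite_of_injective_forall_mem (f := fun j : ℕ => sparseSeq (j + K))
    · intro a b hab
      have := sparseSeq_strictMono.injective hab
      omega
    · intro j
      exact hK' (j + K) (by omega)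
  refine ⟨hinf, ?_⟩
  set p : ℕ → Prop := fun n => x n = true with hp
  rw [ENNReal.tendsto_atTop_zero]
  intro ε hε
  obtain ⟨j, hj⟩ := ENNReal.exists_inv_two_pow_lt hε.ne'
  set k := max j K with hk
  have hx1 : p (sparseSeq k) := hK' k (le_max_right _ _)
  have hnth : Nat.nth p (Nat.count p (sparseSeq k)) = sparseSeq k := Nat.nth_count hx1
  refine ⟨Nat.count p (sparseSeq k) + 1, fun N hN => ?_⟩
  have hmem : Nat.count p (sparseSeq k) ∈ Finset.range N := Finset.mem_range.mpr (by omega)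
  calc ∏ i ∈ Finset.range N, r (Nat.nth p i)
      = r (Nat.nth p (Nat.count p (sparseSeq k))) *
        ∏ i ∈ (Finset.range N).erase (Nat.count p (sparseSeq k)), r (Nat.nth p i) :=
        (Finset.mul_prod_erase _ _ hmem).symm
    _ ≤ r (Nat.nth p (Nat.count p (sparseSeq k))) * 1 :=
        mul_le_mul_right (Finset.prod_le_one' (fun i _ => sparse_r_le_one r hr _)) _
    _ = ((2 : ℝ≥0∞) ^ k)⁻¹ := by rw [mul_one, hnth, hr.1 k]
    _ ≤ ((2 : ℝ≥0∞) ^ j)⁻¹ :=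
        ENNReal.inv_le_inv' (pow_le_pow_right₀ one_le_two (le_max_left _ _))
    _ = (2 : ℝ≥0∞)⁻¹ ^ j := ENNReal.inv_pow
    _ ≤ ε := hj.le
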